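/- Let q > 2 be a prime power, and let C be a (possibly reducible) plane curve over F_q of degree q-1 whose set of F_q-points equals P²(F_q) minus the union of the three coordinate lines. Then the homogeneous defining polynomial of C is, up to a nonzero scalar, of the form α x₀^(q-1) + β x₁^(q-1) + γ x₂^(q-1) with α, β, γ ∈ F_q all nonzero and α + β + γ = 0. -/

import Mathlib

open MvPolynomial

theorem aux_uni {F} [Field F] [Fintype F] {p : Polynomial F}
    (hdeg : p.natDegree ≤ Fintype.card F - 1) (hv : ∀ x : F, x ≠ 0 → p.eval x = 0) :
    p = Polynomial.C (p.coeff (Fintype.card F - 1)) * (Polynomial.X ^ (Fintype.card F - 1) - 1) := by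
  classical
  set n := Fintype.card F - 1 with hn
  have hn1 : 1 ≤ n := Nat.le_sub_one_of_lt Fintype.one_lt_card
  have hn0 : n ≠ 0 := by omega
  set r := p - Polynomial.C (p.coeff n) * (Polynomial.X ^ n - 1) with hr
  have hre : ∀ x : F, x ≠ 0 → r.eval x = 0 := by
    intro x hx
    simp [hr, hv x hx, show x ^ n = 1 from FiniteField.pow_card_sub_one_eq_one x hx, ← hn]
  have hcr : r.coeff n = 0 := by
    simp [hr, Polynomial.coeff_X_pow, Polynomial.coeff_one, hn0, Ne.symm hn0]
  have hrd : r.natDegree ≤ n := by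
    refine (Polynomial.natDegree_sub_le _ _).trans (max_le hdeg ?_)
    exact (Polynomial.natDegree_C_mul_le _ _).trans (by
      refine (Polynomial.natDegree_sub_le _ _).trans ?_
      simp)
  have : r = 0 := by
    rcases eq_or_ne r 0 with h | h
    · exact h
    have hlt : r.natDegree < n := by
      rcases lt_or_eq_of_le hrd with h' | h'
      · exact h'
      · exfalso
        apply Polynomial.leadingCoeff_ne_zero.mpr h
        rwa [Polynomial.leadingCoeff, h']
    refine Polynomial.eq_zero_of_natDegree_lt_card_of_eval_eq_zero' r
      (Finset.univ.erase (0:F)) (fun i hi => hre i (Finset.ne_of_mem_erase hi)) ?_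
    rwa [Finset.card_erase_of_mem (Finset.mem_univ _), Finset.card_univ]
  have := sub_eq_zero.mp this
  linear_combination this

theorem aux_eval_smul {F} [CommSemiring F] {f : MvPolynomial (Fin 3) F} {n : ℕ}
    (hf : f.IsHomogeneous n) (c : F) (v : Fin 3 → F) :
    eval (c • v) f = c ^ n * eval v f := by
  rw [eval_eq', eval_eq', Finset.mul_sum]
  refine Finset.sum_congr rfl fun d hd => ?_
  have hdeg : ∑ i, d i = n := by
    have := hf (MvPolynomial.mem_support_iff.mp hd)
    rw [Finsupp.weight_apply, Finsupp.sum_fintype] at this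
    · simpa using this
    · simp
  rw [← hdeg, ← Finset.prod_pow_eq_pow_sum]
  simp only [Pi.smul_apply, smul_eq_mul, mul_pow, Finset.prod_mul_distrib]
  ring

theorem aux_deg_sum {F} [CommSemiring F] {f : MvPolynomial (Fin 3) F} {n : ℕ}
    (hf : f.IsHomogeneous n) {d : Fin 3 →₀ ℕ} (hd : d ∈ f.support) : ∑ i, d i = n := by
  have := hf (MvPolynomial.mem_support_iff.mp hd)
  rw [Finsupp.weight_apply, Finsupp.sum_fintype] at this
  · simpa using this
  · simp

theorem aux_single {F} [CommSemiring F] {f : MvPolynomial (Fin 3) F} {n : ℕ}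
    (hf : f.IsHomogeneous n) {d : Fin 3 →₀ ℕ} (hd : d ∈ f.support) {k : Fin 3}
    (hk : d k = n) : d = Finsupp.single k n := by
  have hsum := aux_deg_sum hf hd
  ext i
  rcases eq_or_ne i k with h | h
  · subst h; simp [hk]
  · have h2 : ∑ j, d j = d k + ∑ j ∈ Finset.univ.erase k, d j := by
      rw [Finset.add_sum_erase _ _ (Finset.mem_univ k)]
    have hz : ∑ j ∈ Finset.univ.erase k, d j = 0 := by omega
    have : d i = 0 := Finset.sum_eq_zero_iff.mp hz i (by simp [h])
    simp [this, Finsupp.single_apply, Ne.symm h]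

theorem aux_eval_single {F} [CommSemiring F] {f : MvPolynomial (Fin 3) F} {n : ℕ}
    (hf : f.IsHomogeneous n) (k : Fin 3) :
    MvPolynomial.eval (Pi.single k (1:F)) f = MvPolynomial.coeff (Finsupp.single k n) f := by
  classical
  rw [MvPolynomial.eval_eq']
  rw [Finset.sum_eq_single (Finsupp.single k n)]
  · have : ∀ i ∈ Finset.univ,
        ((Pi.single k (1:F) : Fin 3 → F) i) ^ ((Finsupp.single k n : Fin 3 →₀ ℕ) i) = 1 := by
      intro i _
      rcases eq_or_ne i k with h | h
      · subst h; simp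
      · rw [Finsupp.single_apply, if_neg (Ne.symm h), pow_zero]
    rw [Finset.prod_congr rfl this, Finset.prod_const_one, mul_one]
  · intro d hd hne
    have : ∃ i, i ≠ k ∧ d i ≠ 0 := by
      by_contra h
      push_neg at h
      have hsum := aux_deg_sum hf hd
      have h2 : ∑ j, d j = d k + ∑ j ∈ Finset.univ.erase k, d j := by
        rw [Finset.add_sum_erase _ _ (Finset.mem_univ k)]
      have hz : ∑ j ∈ Finset.univ.erase k, d j = 0 :=
        Finset.sum_eq_zero fun j hj => h j (Finset.ne_of_mem_erase hj)
      exact hne (aux_single hf hd (by omega))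
    obtain ⟨i, hik, hdi⟩ := this
    rw [Finset.prod_eq_zero (Finset.mem_univ i), mul_zero]
    rw [Pi.single_eq_of_ne hik, zero_pow hdi]
  · intro h
    rw [MvPolynomial.notMem_support_iff.mp h, zero_mul]

theorem aux_sub_eval {F} [CommSemiring F] (f : MvPolynomial (Fin 3) F) (k : Fin 3) (s : Fin 3 → F) (c : F) :
    (MvPolynomial.aeval (fun i => if i = k then Polynomial.X else Polynomial.C (s i)) f).eval c
      = MvPolynomial.eval (Function.update s k c) f := by
  have h1 : (Polynomial.evalRingHom c) ((MvPolynomial.aeval (fun i => if i = k then Polynomial.X else Polynomial.C (s i)) f))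
      = MvPolynomial.eval₂ ((Polynomial.evalRingHom c).comp (algebraMap F (Polynomial F)))
        ((Polynomial.evalRingHom c) ∘ (fun i => if i = k then Polynomial.X else Polynomial.C (s i))) f := by
    rw [MvPolynomial.aeval_def, MvPolynomial.eval₂_comp_left]
  simp only [Polynomial.coe_evalRingHom] at h1
  rw [h1]
  have h2 : (Polynomial.evalRingHom c).comp (algebraMap F (Polynomial F)) = RingHom.id F := by
    ext a; simp
  rw [h2, MvPolynomial.eval₂_id]
  have h3 : (Polynomial.eval c ∘ fun i => if i = k then Polynomial.X else Polynomial.C (s i))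
      = Function.update s k c := by
    funext i
    rcases eq_or_ne i k with h | h
    · subst h; simp
    · simp [h, Function.update_of_ne h]
  rw [h3]

theorem aux_sub_natDegree {F} [CommSemiring F] {f : MvPolynomial (Fin 3) F} {n : ℕ}
    (hf : f.IsHomogeneous n) (k : Fin 3) (s : Fin 3 → F) :
    (MvPolynomial.aeval (fun i => if i = k then Polynomial.X else Polynomial.C (s i)) f).natDegree ≤ n := by
  rw [MvPolynomial.aeval_def, MvPolynomial.eval₂_eq]
  refine Polynomial.natDegree_sum_le_of_forall_le _ _ fun d hd => ?_
  refine (Polynomial.natDegree_mul_le).trans ?_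
  have h1 : (algebraMap F (Polynomial F) (MvPolynomial.coeff d f)).natDegree = 0 :=
    Polynomial.natDegree_C _
  rw [h1, zero_add]
  refine (Polynomial.natDegree_prod_le _ _).trans ?_
  refine le_trans ?_ (le_of_eq (aux_deg_sum hf hd))
  refine le_trans (Finset.sum_le_sum (g := fun i => d i) fun i _ => ?_) ?_
  · rcases eq_or_ne i k with h | h
    · rw [if_pos h]
      refine (Polynomial.natDegree_pow_le).trans ?_
      calc d i * Polynomial.X.natDegree ≤ d i * 1 :=
            Nat.mul_le_mul_left _ Polynomial.natDegree_X_le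
        _ = d i := mul_one _
    · rw [if_neg h]
      refine (Polynomial.natDegree_pow_le).trans ?_
      simp
  · exact Finset.sum_le_sum_of_subset (Finset.subset_univ _)

theorem aux_sub_coeff {F} [CommSemiring F] {f : MvPolynomial (Fin 3) F} {n : ℕ}
    (hf : f.IsHomogeneous n) (k : Fin 3) (s : Fin 3 → F) :
    (MvPolynomial.aeval (fun i => if i = k then Polynomial.X else Polynomial.C (s i)) f).coeff n
      = MvPolynomial.coeff (Finsupp.single k n) f := by
  classical
  rw [MvPolynomial.aeval_def, MvPolynomial.eval₂_eq, Polynomial.finset_sum_coeff]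
  have key : ∀ d ∈ f.support,
      (algebraMap F (Polynomial F) (MvPolynomial.coeff d f) * ∏ i ∈ d.support, (if i = k then Polynomial.X else Polynomial.C (s i)) ^ d i).coeff n
      = (if d k = n then MvPolynomial.coeff d f * ∏ i ∈ d.support.erase k, s i ^ d i else 0) := by
    intro d _
    have hC : ∀ i ∈ d.support.erase k,
        (if i = k then Polynomial.X else Polynomial.C (s i)) ^ d i = Polynomial.C (s i ^ d i) := by
      intro i hi
      rw [if_neg (Finset.ne_of_mem_erase hi), ← map_pow]
    have hprod : (∏ i ∈ d.support, (if i = k then Polynomial.X else Polynomial.C (s i)) ^ d i)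
        = Polynomial.C (∏ i ∈ d.support.erase k, s i ^ d i) * Polynomial.X ^ (d k) := by
      by_cases hk : k ∈ d.support
      · rw [← Finset.mul_prod_erase _ _ hk, Finset.prod_congr rfl hC, ← map_prod,
          if_pos rfl, mul_comm]
      · have hdk : d k = 0 := Finsupp.notMem_support_iff.mp hk
        rw [Finset.erase_eq_of_notMem hk] at hC ⊢
        rw [Finset.prod_congr rfl hC, ← map_prod, hdk, pow_zero, mul_one]
    rw [hprod, ← mul_assoc, Polynomial.algebraMap_eq, ← map_mul, Polynomial.coeff_C_mul,
      Polynomial.coeff_X_pow]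
    by_cases h : d k = n
    · simp [h]
    · simp [h, Ne.symm h]
  rw [Finset.sum_congr rfl key]
  rw [Finset.sum_eq_single (Finsupp.single k n)]
  · rw [if_pos (by simp)]
    have : (Finsupp.single k n).support.erase k = ∅ := by
      apply Finset.eq_empty_of_forall_notMem
      intro i hi
      have h1 := Finset.ne_of_mem_erase hi
      have h2 := Finsupp.mem_support_iff.mp (Finset.mem_of_mem_erase hi)
      simp [Finsupp.single_apply, Ne.symm h1] at h2
    rw [this, Finset.prod_empty, mul_one]
  · intro d hd hne
    rw [if_neg (fun h => hne (aux_single hf hd h))]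
  · intro h
    rw [if_pos (by simp), MvPolynomial.notMem_support_iff.mp h, zero_mul]

/-- A plane curve over `F_q` of degree `q-1` whose `F_q`-points are exactly the complement of
the three coordinate lines is defined by `α x₀^(q-1) + β x₁^(q-1) + γ x₂^(q-1) = 0` with
`αβγ ≠ 0` and `α + β + γ = 0` (up to a nonzero scalar, which can be absorbed into `α,β,γ`). -/
theorem stmt_6 (F : Type*) [Field F] [Fintype F] (q : ℕ) (hq : Fintype.card F = q)
    (h2 : 2 < q) (f : MvPolynomial (Fin 3) F) (hf0 : f ≠ 0)
    (hhom : f.IsHomogeneous (q - 1))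
    (hzero : ∀ P : Projectivization F (Fin 3 → F),
        eval P.rep f = 0 ↔ (P.rep 0 ≠ 0 ∧ P.rep 1 ≠ 0 ∧ P.rep 2 ≠ 0)) :
    ∃ α β γ : F, α ≠ 0 ∧ β ≠ 0 ∧ γ ≠ 0 ∧ α + β + γ = 0 ∧
      f = C α * (X 0 : MvPolynomial (Fin 3) F) ^ (q - 1)
        + C β * (X 1 : MvPolynomial (Fin 3) F) ^ (q - 1)
        + C γ * (X 2 : MvPolynomial (Fin 3) F) ^ (q - 1) := by
  classical
  subst hq
  set n := Fintype.card F - 1 with hn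
  have hn0 : n ≠ 0 := by omega
  have hpow : ∀ x : F, x ≠ 0 → x ^ n = 1 := fun x hx =>
    FiniteField.pow_card_sub_one_eq_one x hx
  -- affine criterion
  have hA : ∀ v : Fin 3 → F, v ≠ 0 →
      ((eval v) f = 0 ↔ (v 0 ≠ 0 ∧ v 1 ≠ 0 ∧ v 2 ≠ 0)) := by
    intro v hv
    obtain ⟨a, ha⟩ := (Projectivization.mk_eq_mk_iff F _ v
      (Projectivization.mk F v hv).rep_nonzero hv).mp (Projectivization.mk_rep _)
    have h1 := hzero (Projectivization.mk F v hv)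
    rw [← ha] at h1
    have hsm : (a • v : Fin 3 → F) = ((a : F) • v) := by
      funext i; simp [Units.smul_def]
    rw [hsm] at h1
    rw [aux_eval_smul hhom] at h1
    simp only [Pi.smul_apply, smul_eq_mul] at h1
    have ha0 : (a : F) ≠ 0 := a.ne_zero
    have hpa : ((a : F)) ^ n ≠ 0 := pow_ne_zero _ ha0
    rw [mul_eq_zero] at h1
    constructor
    · intro h
      have := h1.mp (Or.inr h)
      refine ⟨?_, ?_, ?_⟩
      · intro hz; exact this.1 (by rw [hz, mul_zero])
      · intro hz; exact this.2.1 (by rw [hz, mul_zero])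
      · intro hz; exact this.2.2 (by rw [hz, mul_zero])
    · intro h
      have := h1.mpr ⟨mul_ne_zero ha0 h.1, mul_ne_zero ha0 h.2.1, mul_ne_zero ha0 h.2.2⟩
      rcases this with h' | h'
      · exact absurd h' hpa
      · exact h'
  -- values at single-coordinate vectors
  have hval1 : ∀ (k : Fin 3) (a : F), a ≠ 0 →
      eval (Pi.single k a) f = eval (Pi.single k (1:F)) f := by
    intro k a ha
    have hs : (Pi.single k a : Fin 3 → F) = a • (Pi.single k 1 : Fin 3 → F) := by
      funext i
      rcases eq_or_ne i k with h | h
      · subst h; simp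
      · simp [Pi.single_eq_of_ne h]
    rw [hs, aux_eval_smul hhom, hpow a ha, one_mul]
  have hsne : ∀ k : Fin 3, (Pi.single k (1:F) : Fin 3 → F) ≠ 0 := by
    intro k h0
    have := congrFun h0 k
    simp at this
  have hne : ∀ k : Fin 3, eval (Pi.single k (1:F)) f ≠ 0 := by
    intro k h
    have := (hA _ (hsne k)).mp h
    fin_cases k
    · exact this.2.1 (by simp [Pi.single_eq_of_ne])
    · exact this.1 (by simp [Pi.single_eq_of_ne])
    · exact this.1 (by simp [Pi.single_eq_of_ne])
  -- key: value at a vector whose k-th coordinate vanishes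
  have hF3 : ∀ (k : Fin 3) (v : Fin 3 → F), v k = 0 →
      (∀ c : F, c ≠ 0 → eval (Function.update v k c) f = 0) →
      eval v f = - MvPolynomial.coeff (Finsupp.single k n) f := by
    intro k v hvk hc
    have hup : ∀ c, (MvPolynomial.aeval
        (fun i => if i = k then Polynomial.X else Polynomial.C (v i)) f).eval c
        = eval (Function.update v k c) f := fun c => aux_sub_eval f k v c
    have h0 := congrArg (Polynomial.eval 0)
      (aux_uni (aux_sub_natDegree hhom k v) (fun x hx => by rw [hup]; exact hc x hx))
    rw [hup 0, show Function.update v k 0 = v from by rw [← hvk, Function.update_eq_self],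
      aux_sub_coeff hhom k v, Polynomial.eval_mul, Polynomial.eval_C, Polynomial.eval_sub,
      Polynomial.eval_pow, Polynomial.eval_X, Polynomial.eval_one, zero_pow hn0] at h0
    rw [h0]; ring
  have hF3' : ∀ (k : Fin 3) (v : Fin 3 → F), v k = 0 → (∀ i, i ≠ k → v i ≠ 0) →
      eval v f = - eval (Pi.single k (1:F)) f := by
    intro k v hvk hvi
    rw [aux_eval_single hhom k]
    refine hF3 k v hvk fun c hc => ?_
    have hcoord : ∀ i, Function.update v k c i ≠ 0 := by
      intro i
      rcases eq_or_ne i k with h | h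
      · subst h; rw [Function.update_self]; exact hc
      · rw [Function.update_of_ne h]; exact hvi i h
    have hnz : Function.update v k c ≠ 0 := by
      intro h0; exact hcoord k (by rw [h0]; rfl)
    exact (hA _ hnz).mpr ⟨hcoord 0, hcoord 1, hcoord 2⟩
  set α := eval (Pi.single 0 (1:F)) f with hα
  set β := eval (Pi.single 1 (1:F)) f with hβ
  set γ := eval (Pi.single 2 (1:F)) f with hγ
  -- the sum relation α + β + γ = 0
  have hsum : α + β + γ = 0 := by
    set p := MvPolynomial.aeval
      (fun i => if i = (1 : Fin 3) then Polynomial.X else Polynomial.C ((Pi.single 0 (1:F) : Fin 3 → F) i)) f with hp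
    have hup : ∀ c, p.eval c = eval (Function.update (Pi.single 0 (1:F)) 1 c) f :=
      fun c => aux_sub_eval f 1 (Pi.single 0 (1:F)) c
    have hvcoord : ∀ b : F, b ≠ 0 → p.eval b = -γ := by
      intro b hb
      rw [hup b, hγ]
      refine hF3' 2 _ (by simp [Function.update_apply, Pi.single_apply]) ?_
      intro i hi
      rcases eq_or_ne i 1 with h | h
      · subst h
        simpa [Function.update_apply] using hb
      · have h0' : i = 0 := by fin_omega
        subst h0'
        simp [Function.update_apply, Pi.single_apply]
    have hq1 : ∀ x : F, x ≠ 0 → (p + Polynomial.C γ).eval x = 0 := by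
      intro x hx
      rw [Polynomial.eval_add, Polynomial.eval_C, hvcoord x hx]
      ring
    have hdeg : (p + Polynomial.C γ).natDegree ≤ n := by
      refine (Polynomial.natDegree_add_le _ _).trans (max_le ?_ ?_)
      · exact aux_sub_natDegree hhom 1 _
      · simp
    have hco : (p + Polynomial.C γ).coeff n = β := by
      rw [Polynomial.coeff_add, Polynomial.coeff_C, if_neg hn0, add_zero, hp,
        aux_sub_coeff hhom 1 _, hβ, aux_eval_single hhom 1]
    have hupd : Function.update (Pi.single 0 (1:F) : Fin 3 → F) 1 (0:F)
        = (Pi.single 0 (1:F) : Fin 3 → F) := by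
      funext i
      rcases eq_or_ne i 1 with h | h
      · subst h
        simp [Function.update_apply, Pi.single_apply]
      · simp [Function.update_apply, h]
    have h0 := congrArg (Polynomial.eval 0) (aux_uni hdeg hq1)
    rw [Polynomial.eval_add, Polynomial.eval_C, hco, Polynomial.eval_mul, Polynomial.eval_C,
      Polynomial.eval_sub, Polynomial.eval_pow, Polynomial.eval_X, Polynomial.eval_one,
      zero_pow hn0, hup 0, hupd, ← hα] at h0
    linear_combination h0
  refine ⟨α, β, γ, hne 0, hne 1, hne 2, hsum, ?_⟩
  set g := C α * (X 0 : MvPolynomial (Fin 3) F) ^ n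
        + C β * (X 1 : MvPolynomial (Fin 3) F) ^ n
        + C γ * (X 2 : MvPolynomial (Fin 3) F) ^ n with hg
  have hmono : ∀ (i : Fin 3) (c : F),
      C c * (X i : MvPolynomial (Fin 3) F) ^ n ∈ restrictDegree (Fin 3) F n := by
    intro i c
    rw [MvPolynomial.C_mul_X_pow_eq_monomial, mem_restrictDegree]
    intro s hs j
    have := MvPolynomial.support_monomial_subset hs
    rw [Finset.mem_singleton] at this
    subst this
    rw [Finsupp.single_apply]
    split <;> omega
  have hmem : f - g ∈ restrictDegree (Fin 3) F n := by
    refine sub_mem ?_ ?_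
    · rw [mem_restrictDegree]
      intro s hs i
      have := aux_deg_sum hhom hs
      have h1 : s i ≤ ∑ j, s j := Finset.single_le_sum (f := fun j => s j) (by intros; omega) (Finset.mem_univ i)
      omega
    · exact add_mem (add_mem (hmono 0 α) (hmono 1 β)) (hmono 2 γ)
  have hzero0 : eval (0 : Fin 3 → F) f = 0 := by
    have := aux_eval_smul hhom (0:F) 0
    rw [smul_zero, zero_pow hn0, zero_mul] at this
    exact this
  have heval : ∀ v : Fin 3 → F, eval v (f - g) = 0 := by
    intro v
    rw [map_sub, sub_eq_zero]
    have hgv : eval v g = α * v 0 ^ n + β * v 1 ^ n + γ * v 2 ^ n := by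
      simp [hg]
    rcases eq_or_ne (v 0) 0 with h0 | h0 <;> rcases eq_or_ne (v 1) 0 with h1 | h1 <;>
      rcases eq_or_ne (v 2) 0 with h2 | h2
    · -- all zero
      have hv : v = 0 := by funext i; fin_cases i <;> assumption
      have hfv : eval v f = 0 := by rw [hv]; exact hzero0
      rw [hfv, hgv, h0, h1, h2, zero_pow hn0]
      ring
    · -- only v 2 nonzero
      have hv : v = Pi.single 2 (v 2) := by
        funext i; fin_cases i <;> simp [Pi.single_eq_of_ne, h0, h1]
      have hfv : eval v f = γ := by rw [hγ, hv, hval1 2 _ h2]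
      rw [hfv, hgv, h0, h1, zero_pow hn0, hpow _ h2]
      ring
    · -- only v 1 nonzero
      have hv : v = Pi.single 1 (v 1) := by
        funext i; fin_cases i <;> simp [Pi.single_eq_of_ne, h0, h2]
      have hfv : eval v f = β := by rw [hβ, hv, hval1 1 _ h1]
      rw [hfv, hgv, h0, h2, zero_pow hn0, hpow _ h1]
      ring
    · -- v 0 = 0, others nonzero
      have := hF3' 0 v h0 (by
        intro i hi; fin_cases i
        · simp at hi
        · exact h1
        · exact h2)
      rw [this, hgv, h0, zero_pow hn0, hpow _ h1, hpow _ h2, ← hα]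
      linear_combination -hsum
    · -- only v 0 nonzero
      have hv : v = Pi.single 0 (v 0) := by
        funext i; fin_cases i <;> simp [Pi.single_eq_of_ne, h1, h2]
      have hfv : eval v f = α := by rw [hα, hv, hval1 0 _ h0]
      rw [hfv, hgv, h1, h2, zero_pow hn0, hpow _ h0]
      ring
    · -- v 1 = 0, others nonzero
      have := hF3' 1 v h1 (by
        intro i hi; fin_cases i
        · exact h0
        · simp at hi
        · exact h2)
      rw [this, hgv, h1, zero_pow hn0, hpow _ h0, hpow _ h2, ← hβ]
      linear_combination -hsum
    · -- v 2 = 0, others nonzero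
      have := hF3' 2 v h2 (by
        intro i hi; fin_cases i
        · exact h0
        · exact h1
        · simp at hi)
      rw [this, hgv, h2, zero_pow hn0, hpow _ h0, hpow _ h1, ← hγ]
      linear_combination -hsum
    · -- all nonzero
      have hvne : v ≠ 0 := fun h => h0 (by rw [h]; rfl)
      rw [(hA v hvne).mpr ⟨h0, h1, h2⟩, hgv, hpow _ h0, hpow _ h1, hpow _ h2]
      linear_combination -hsum
  have hinj : Function.Injective (ULift.up : Fin 3 → ULift (Fin 3)) :=
    fun a b hab => congrArg ULift.down hab
  have hz' : MvPolynomial.rename (ULift.up : Fin 3 → ULift (Fin 3)) (f - g) = 0 := by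
    refine MvPolynomial.eq_zero_of_eval_eq_zero _ F _ ?_ ?_
    · intro v
      rw [MvPolynomial.eval_rename]
      exact heval _
    · rw [mem_restrictDegree]
      intro s hs i
      rw [MvPolynomial.support_rename_of_injective hinj] at hs
      obtain ⟨t, ht, rfl⟩ := Finset.mem_image.mp hs
      have := (mem_restrictDegree _ _ _).mp hmem t ht i.down
      rwa [← Finsupp.mapDomain_apply hinj t i.down] at this
  have := MvPolynomial.rename_injective _ hinj (hz'.trans (map_zero _).symm)
  rw [sub_eq_zero] at this
  exact this
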